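/- Let w_l, w_r ∈ F(A) with w_l right-positive and w_r positive. Then the product w_l·w_r is positive if and only if w_l is positive. -/

import Mathlib

namespace PositiveWords

variable {A : Type*} [DecidableEq A]

/-- The degree of a list of letters: +1 for each positive letter, −1 for each inverse letter. -/
def degree (t : List (A × Bool)) : ℤ :=
  (t.map fun p => if p.2 then (1 : ℤ) else -1).sum

/-- A positive element of the free group: every letter of its reduced word is positive. -/
def Positive (w : FreeGroup A) : Prop :=
  ∀ p ∈ w.toWord, p.2 = true

/-- A right-positive element: every suffix of its reduced word has nonnegative degree. -/
def RightPositive (w : FreeGroup A) : Prop :=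
  ∀ s t : List (A × Bool), w.toWord = s ++ t → 0 ≤ degree t

/-- A list satisfying the no-cancellation chain condition is fixed by `reduce`. -/
lemma reduce_eq_self_of_chain' : ∀ (l : List (A × Bool)),
    List.Chain' (fun p q : A × Bool => ¬(p.1 = q.1 ∧ p.2 = !q.2)) l →
    FreeGroup.reduce l = l := by
  intro l
  induction l with
  | nil => intro _; rfl
  | cons x l ih =>
    intro h
    rw [FreeGroup.reduce.cons, ih h.tail]
    cases l with
    | nil => rfl
    | cons y t =>
      simp only
      rw [if_neg (List.isChain_cons_cons.mp h).1]

/-- The reduced word of a free group element satisfies the no-cancellation chain condition. -/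
lemma chain'_toWord (w : FreeGroup A) :
    List.Chain' (fun p q : A × Bool => ¬(p.1 = q.1 ∧ p.2 = !q.2)) w.toWord := by
  apply List.isChain_iff_getElem.mpr
  intro i hlt hc
  obtain ⟨h1, h2⟩ := hc
  set L := w.toWord with hL
  have hi : i < L.length := by omega
  have hi1 : i + 1 < L.length := by omega
  have hsplit : L = L.take i ++ (L.get ⟨i, hi⟩) :: (L.get ⟨i + 1, hi1⟩) :: L.drop (i + 2) := by
    conv_lhs => rw [← List.take_append_drop i L]
    congr 1
    rw [List.drop_eq_getElem_cons hi, List.drop_eq_getElem_cons hi1]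
    simp [List.get_eq_getElem]
  have hpair : L.get ⟨i + 1, hi1⟩ = ((L.get ⟨i, hi⟩).1, !(L.get ⟨i, hi⟩).2) :=
    Prod.ext h1.symm (by simp only [List.get_eq_getElem, hL, h2, Bool.not_not])
  have hred := FreeGroup.reduce_toWord w
  rw [← hL] at hred
  exact FreeGroup.reduce.not (x := (L.get ⟨i, hi⟩).1) (b := (L.get ⟨i, hi⟩).2)
    (hred.trans (hsplit.trans (by rw [hpair])))

/-- If the last letter of a right-positive element exists, it is positive. -/
lemma rightPositive_last {w : FreeGroup A} (hl : RightPositive w)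
    {p : A × Bool} (hp : w.toWord.getLast? = some p) : p.2 = true := by
  have h := List.dropLast_append_getLast? p hp
  have := hl w.toWord.dropLast [p] h.symm
  by_contra hfalse
  simp [degree, hfalse] at this

/-- Key lemma: no cancellation happens when multiplying a right-positive element by a
positive element. -/
lemma toWord_mul_of_rightPositive (wl wr : FreeGroup A)
    (hl : RightPositive wl) (hr : Positive wr) :
    (wl * wr).toWord = wl.toWord ++ wr.toWord := by
  have hmul : wl * wr = FreeGroup.mk (wl.toWord ++ wr.toWord) := by
    rw [← FreeGroup.mul_mk, FreeGroup.mk_toWord, FreeGroup.mk_toWord]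
  rw [hmul, FreeGroup.toWord_mk]
  apply reduce_eq_self_of_chain'
  apply List.isChain_append.mpr
  refine ⟨chain'_toWord wl, ?_, ?_⟩
  · -- Chain' on wr.toWord: all letters positive, so no cancellation
    apply List.isChain_iff_getElem.mpr
    intro i hlt hc
    obtain ⟨_, h2⟩ := hc
    have ha := hr _ (List.getElem_mem (show i < wr.toWord.length by omega))
    have hb := hr _ (List.getElem_mem (show i + 1 < wr.toWord.length by omega))
    rw [ha, hb] at h2
    simp at h2
  · -- boundary: last of wl.toWord is positive, head of wr.toWord is positive
    intro x hx y hy hc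
    obtain ⟨_, h2⟩ := hc
    have hxpos : x.2 = true := rightPositive_last hl hx
    have hypos : y.2 = true := hr y (List.mem_of_mem_head? hy)
    rw [hxpos, hypos] at h2
    simp at h2

/-- If `wl` is right-positive and `wr` is positive, then `wl * wr` is positive iff `wl` is. -/
theorem positive_mul_iff (wl wr : FreeGroup A)
    (hl : RightPositive wl) (hr : Positive wr) :
    Positive (wl * wr) ↔ Positive wl := by
  have key := toWord_mul_of_rightPositive wl wr hl hr
  constructor
  · intro h p hp
    exact h p (by rw [key]; exact List.mem_append_left _ hp)
  · intro h p hp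
    rw [key, List.mem_append] at hp
    rcases hp with hp | hp
    · exact h p hp
    · exact hr p hp

end PositiveWords
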